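/- arXiv:1901.04552 — 2 statements merged into one kernel-verified Lean document; each statement's English description precedes it below -/
import Mathlib

section
/- Let g be a Lie algebra graded by a finite set of nonzero linear functionals Σ on an abelian subalgebra a via root spaces g_λ with [g_λ,g_μ] ⊆ g_{λ+μ}, and fix a linear functional ℓ on the span of Σ taking positive values on a subset Σ⁺ with Σ = Σ⁺ ∪ (−Σ⁺). Then n = ⊕_{λ∈Σ⁺} g_λ is a nilpotent Lie subalgebra of g. -/
/-- Induction principle for membership in `⨆ lam ∈ s, g lam`. -/
theorem stmt_8_aux {L W : Type*} [LieRing L] [LieAlgebra ℝ L]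
    (g : W → Submodule ℝ L) (s : Set W) {x : L} (hx : x ∈ ⨆ lam ∈ s, g lam)
    (p : L → Prop) (h0 : p 0) (hadd : ∀ a b, p a → p b → p (a + b))
    (hmem : ∀ lam ∈ s, ∀ y ∈ g lam, p y) : p x := by
  rw [iSup_subtype'] at hx
  refine Submodule.iSup_induction (motive := p) (fun lam : s => g lam) hx ?_ h0 hadd
  rintro ⟨lam, hlam⟩ y hy
  exact hmem lam hlam y hy

/-- Given a root-space grading of g over a finite set Σ of nonzero functionals, with
[g_λ, g_μ] ⊆ g_{λ+μ}, g_ν = 0 for ν ∉ Σ ∪ {0}, and a positivity functional ℓ positive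
on Σ⁺ with Σ = Σ⁺ ∪ (−Σ⁺), the sum n = ⊕_{λ∈Σ⁺} g_λ is a nilpotent Lie subalgebra. -/
theorem stmt_8 {L W : Type*} [LieRing L] [LieAlgebra ℝ L] [FiniteDimensional ℝ L]
    [AddCommGroup W] [Module ℝ W]
    (g : W → Submodule ℝ L) (Sig SigP : Finset W)
    (hSub : SigP ⊆ Sig)
    (hroots : ∀ lam ∈ Sig, lam ≠ (0 : W))
    (hzero : ∀ ν : W, ν ∉ Sig → ν ≠ 0 → g ν = ⊥)
    (hbracket : ∀ lam mu : W, ∀ x ∈ g lam, ∀ y ∈ g mu, ⁅x, y⁆ ∈ g (lam + mu))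
    (ell : W →ₗ[ℝ] ℝ) (hpos : ∀ lam ∈ SigP, 0 < ell lam)
    (hunion : ∀ lam ∈ Sig, lam ∈ SigP ∨ -lam ∈ SigP) :
    ∃ n : LieSubalgebra ℝ L,
      n.toSubmodule = (⨆ lam ∈ SigP, g lam) ∧ LieModule.IsNilpotent n n := by
  classical
  set N : Submodule ℝ L := ⨆ lam ∈ SigP, g lam with hNdef
  -- the positivity gap ε
  set ε : ℝ := if h : SigP.Nonempty then (SigP.image ell).min' (h.image ell) else 1 with hεdef
  have hε_pos : 0 < ε := by
    rw [hεdef]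
    split_ifs with h
    · obtain ⟨lam, hlam, hl⟩ := Finset.mem_image.mp ((SigP.image ell).min'_mem (h.image ell))
      exact hl ▸ hpos lam hlam
    · norm_num
  have hε_le : ∀ lam ∈ SigP, ε ≤ ell lam := by
    intro lam hlam
    rw [hεdef]
    rw [dif_pos ⟨lam, hlam⟩]
    exact Finset.min'_le _ _ (Finset.mem_image_of_mem ell hlam)
  -- an upper bound for ℓ on Σ
  obtain ⟨B, hB⟩ : ∃ B : ℝ, ∀ lam ∈ Sig, ell lam ≤ B :=
    ⟨(insert (0 : ℝ) (Sig.image ell)).max' (by simp), fun lam h =>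
      Finset.le_max' _ _ (Finset.mem_insert_of_mem (Finset.mem_image_of_mem ell h))⟩
  obtain ⟨K, hK⟩ := exists_nat_gt (B / ε)
  have hKB : B < K * ε := by
    rw [div_lt_iff₀ hε_pos] at hK; linarith
  -- filtration
  set Q : ℕ → Submodule ℝ L :=
    fun k => ⨆ lam ∈ Sig.filter (fun lam => (k : ℝ) * ε ≤ ell lam), g lam with hQdef
  have hNQ0 : N ≤ Q 0 := by
    rw [hNdef, hQdef]
    refine iSup₂_le fun lam hlam => le_iSup₂_of_le lam ?_ le_rfl
    exact Finset.mem_filter.mpr ⟨hSub hlam, by simpa using (hpos lam hlam).le⟩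
  -- the key bracket step
  have hstep : ∀ k : ℕ, ∀ x ∈ N, ∀ y ∈ Q k, ⁅x, y⁆ ∈ Q (k + 1) := by
    intro k x hx y hy
    refine stmt_8_aux g _ hx (fun x => ⁅x, y⁆ ∈ Q (k+1)) (by simp) ?_ ?_
    · intro a b ha hb; rw [add_lie]; exact (Q (k+1)).add_mem ha hb
    intro lam hlam x' hx'
    refine stmt_8_aux g _ hy (fun y => ⁅x', y⁆ ∈ Q (k+1)) (by simp) ?_ ?_
    · intro a b ha hb; rw [lie_add]; exact (Q (k+1)).add_mem ha hb
    intro mu hmu0 y' hy'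
    obtain ⟨hmu, hmu'⟩ := Finset.mem_filter.mp hmu0
    have hbr := hbracket lam mu x' hx' y' hy'
    have hll : ((k : ℝ) + 1) * ε ≤ ell (lam + mu) := by
      rw [map_add]
      have := hε_le lam hlam
      linarith
    by_cases hz : lam + mu = 0
    · exfalso
      rw [hz, map_zero] at hll
      nlinarith [hε_pos]
    by_cases hS : lam + mu ∈ Sig
    · have hle : g (lam + mu) ≤ Q (k + 1) :=
        le_iSup₂_of_le (lam + mu)
          (Finset.mem_filter.mpr ⟨hS, by push_cast; exact hll⟩) le_rfl
      exact hle hbr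
    · rw [hzero _ hS hz] at hbr
      simp_all
  -- N is closed under the bracket
  have hclosed : ∀ x ∈ N, ∀ y ∈ N, ⁅x, y⁆ ∈ N := by
    intro x hx y hy
    refine stmt_8_aux g _ hx (fun x => ⁅x, y⁆ ∈ N) (by simp) ?_ ?_
    · intro a b ha hb; rw [add_lie]; exact N.add_mem ha hb
    intro lam hlam x' hx'
    refine stmt_8_aux g _ hy (fun y => ⁅x', y⁆ ∈ N) (by simp) ?_ ?_
    · intro a b ha hb; rw [lie_add]; exact N.add_mem ha hb
    intro mu hmu y' hy'
    have hbr := hbracket lam mu x' hx' y' hy'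
    have hll : 0 < ell (lam + mu) := by
      rw [map_add]
      have := hpos lam hlam
      have := hpos mu hmu
      linarith
    have hz : lam + mu ≠ 0 := fun h => by rw [h, map_zero] at hll; linarith
    by_cases hS : lam + mu ∈ Sig
    · rcases hunion _ hS with h | h
      · have hle : g (lam + mu) ≤ N := le_iSup₂_of_le (lam + mu) h le_rfl
        exact hle hbr
      · exfalso
        have := hpos _ h
        rw [map_neg] at this
        linarith
    · rw [hzero _ hS hz] at hbr
      simp_all
  refine ⟨{ toSubmodule := N, lie_mem' := fun {x y} hx hy => hclosed x hx y hy }, rfl, ?_⟩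
  set n : LieSubalgebra ℝ L :=
    { toSubmodule := N, lie_mem' := fun {x y} hx hy => hclosed x hx y hy }
  -- Engel: it suffices to show every ad is nilpotent
  rw [LieModule.isNilpotent_iff_forall (R := ℝ)]
  intro x
  refine ⟨K, ?_⟩
  ext y
  have key : ∀ k : ℕ, (((LieAlgebra.ad ℝ n x) ^ k) y : L) ∈ Q k := by
    intro k
    induction k with
    | zero => simpa using hNQ0 y.2
    | succ k ih =>
      rw [pow_succ']
      exact hstep k x x.2 _ ih
  have hQK : Q K = ⊥ := by
    rw [hQdef]
    refine le_bot_iff.mp (iSup₂_le ?_)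
    intro lam hlam0
    obtain ⟨hlam, hl⟩ := Finset.mem_filter.mp hlam0
    exact absurd (le_trans hl (hB lam hlam)) (not_le.mpr hKB)
  have := key K
  rw [hQK, Submodule.mem_bot] at this
  have : ((LieAlgebra.ad ℝ n x) ^ K) y = 0 := Subtype.ext this
  simp [this]
  exact this
end

section
/- Let ∇ be the bilinear map on a ⊕ n determined by the Koszul-type formula ⟨∇_X Y, Z⟩_{AN} = (1/2)(⟨[X,Y],Z⟩_{AN} − ⟨[Y,Z],X⟩_{AN} − ⟨[X,Z],Y⟩_{AN}). Then for all X, Y, Z ∈ a ⊕ n, ⟨∇_X Y, Z⟩_{AN} = (1/4)⟨[X,Y] + [θX,Y] − [X,θY], Z⟩, where ⟨·,·⟩ = k·B_θ. -/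
/-- The Koszul-type formula for the Levi-Civita connection on a ⊕ n:
⟨∇_X Y, Z⟩_{AN} = (1/4)⟨[X,Y] + [θX,Y] − [X,θY], Z⟩, where ⟨·,·⟩ = k·B_θ. -/
theorem stmt_15 {L : Type*} [LieRing L] [LieAlgebra ℝ L] [FiniteDimensional ℝ L]
    (θ : L →ₗ⁅ℝ⁆ L) (hinv : ∀ x, θ (θ x) = x)
    (Bθ : L → L → ℝ) (hBθ : ∀ x y, Bθ x y = -killingForm ℝ L (θ x) y)
    (k : ℝ) (hk : 0 < k)
    (s : Submodule ℝ L) (πa πn : L →ₗ[ℝ] L)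
    (hdecomp : ∀ x ∈ s, πa x + πn x = x)
    (hbs : ∀ x ∈ s, ∀ y ∈ s, ⁅x, y⁆ ∈ s)
    (hbn : ∀ x ∈ s, ∀ y ∈ s, πa ⁅x, y⁆ = 0 ∧ πn ⁅x, y⁆ = ⁅x, y⁆)
    (horth : ∀ x ∈ s, ∀ y ∈ s, ∀ z ∈ s, Bθ ⁅x, y⁆ (πa z) = 0)
    (ipAN : L → L → ℝ)
    (hip : ∀ x y, ipAN x y = k * Bθ (πa x) (πa y) + (k / 2) * Bθ (πn x) (πn y)) :
    ∀ X ∈ s, ∀ Y ∈ s, ∀ Z ∈ s,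
      (1 / 2) * (ipAN ⁅X, Y⁆ Z - ipAN ⁅Y, Z⁆ X - ipAN ⁅X, Z⁆ Y)
        = (1 / 4) * (k * Bθ (⁅X, Y⁆ + ⁅θ X, Y⁆ - ⁅X, θ Y⁆) Z) := by
  classical
  intro X hX Y hY Z hZ
  set B := killingForm ℝ L with hB
  -- θ as a Lie algebra equivalence
  let e : L ≃ₗ⁅ℝ⁆ L :=
    { θ with invFun := θ, left_inv := hinv, right_inv := hinv }
  have hθB : ∀ a b, B (θ a) (θ b) = B a b := fun a b =>
    LieAlgebra.killingForm_of_equiv_apply (R := ℝ) e a b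
  have hθ' : ∀ a b, B (θ a) b = B a (θ b) := by
    intro a b
    calc B (θ a) b = B (θ a) (θ (θ b)) := by rw [hinv]
    _ = B a (θ b) := hθB a (θ b)
  have hsym : ∀ a b, B a b = B b a := fun a b => LieModule.traceForm_comm ℝ L L a b
  have hInv : ∀ a b c, B ⁅a, b⁆ c = B a ⁅b, c⁆ := fun a b c =>
    LieModule.traceForm_apply_lie_apply ℝ L L a b c
  -- ipAN on brackets
  have key : ∀ a ∈ s, ∀ b ∈ s, ∀ c ∈ s, ipAN ⁅a, b⁆ c = (k / 2) * Bθ ⁅a, b⁆ c := by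
    intro a ha b hb c hc
    obtain ⟨h1, h2⟩ := hbn a ha b hb
    have hc' : πn c = c - πa c := eq_sub_of_add_eq' (hdecomp c hc)
    rw [hip, h1, h2, hc']
    have z1 : Bθ (0 : L) (πa c) = 0 := by simp [hBθ]
    have z2 : Bθ ⁅a, b⁆ (c - πa c) = Bθ ⁅a, b⁆ c - Bθ ⁅a, b⁆ (πa c) := by
      simp [hBθ, map_sub]; ring
    rw [z1, z2, horth a ha b hb c hc]
    ring
  rw [key X hX Y hY Z hZ, key Y hY Z hZ X hX, key X hX Z hZ Y hY]
  -- identities for the three terms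
  have e1 : B (θ ⁅Y, Z⁆) X = B ⁅θ X, Y⁆ Z := by
    calc B (θ ⁅Y, Z⁆) X = B ⁅θ Y, θ Z⁆ X := by rw [LieHom.map_lie]
    _ = B X ⁅θ Y, θ Z⁆ := hsym _ _
    _ = B ⁅X, θ Y⁆ (θ Z) := (hInv _ _ _).symm
    _ = B (θ ⁅X, θ Y⁆) Z := (hθ' _ _).symm
    _ = B ⁅θ X, Y⁆ Z := by rw [LieHom.map_lie, hinv]
  have e2 : B (θ ⁅X, Z⁆) Y = -B ⁅X, θ Y⁆ Z := by
    calc B (θ ⁅X, Z⁆) Y = B ⁅θ X, θ Z⁆ Y := by rw [LieHom.map_lie]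
    _ = B (θ X) ⁅θ Z, Y⁆ := hInv _ _ _
    _ = -B (θ X) ⁅Y, θ Z⁆ := by rw [← lie_skew Y (θ Z), map_neg, neg_neg]
    _ = -B ⁅θ X, Y⁆ (θ Z) := by rw [hInv]
    _ = -B (θ ⁅θ X, Y⁆) Z := by rw [hθ']
    _ = -B ⁅X, θ Y⁆ Z := by rw [LieHom.map_lie, hinv]
  have eRHS : Bθ (⁅X, Y⁆ + ⁅θ X, Y⁆ - ⁅X, θ Y⁆) Z
      = -B (θ ⁅X, Y⁆) Z - B ⁅X, θ Y⁆ Z + B ⁅θ X, Y⁆ Z := by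
    rw [hBθ]
    have : θ (⁅X, Y⁆ + ⁅θ X, Y⁆ - ⁅X, θ Y⁆)
        = θ ⁅X, Y⁆ + ⁅X, θ Y⁆ - ⁅θ X, Y⁆ := by
      rw [map_sub, map_add, LieHom.map_lie, LieHom.map_lie, LieHom.map_lie, hinv, hinv]
    rw [this]
    simp only [map_sub, map_add, LinearMap.sub_apply, LinearMap.add_apply]
    ring
  rw [eRHS, hBθ ⁅X, Y⁆ Z, hBθ ⁅Y, Z⁆ X, hBθ ⁅X, Z⁆ Y, e1, e2]
  ring
end
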